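/- arXiv:1106.3156 — 3 statements merged into one kernel-verified Lean document; each statement's English description precedes it below -/
import Mathlib

section
/- Let G be a compact metrizable topological group and 𝒱 an open neighborhood of the identity in G. Then there exists a positive integer m such that every closed subgroup K of G can be covered by m left-translates of 𝒱 by elements of K, i.e., there exist k₁, …, k_m ∈ K with K ⊆ ⋃ᵢ kᵢ𝒱. -/
open scoped Pointwise

/-- Let `G` be a compact metrizable topological group and `𝒱` an open
neighborhood of the identity. Then there is `m ≥ 1` such that every closed subgroup `K`
of `G` is covered by `m` left-translates of `𝒱` by elements of `K`. -/
theorem stmt_1 {G : Type*} [Group G] [TopologicalSpace G] [IsTopologicalGroup G]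
    [CompactSpace G] [TopologicalSpace.MetrizableSpace G]
    (𝒱 : Set G) (h𝒱 : IsOpen 𝒱) (h1 : (1 : G) ∈ 𝒱) :
    ∃ m : ℕ, 0 < m ∧ ∀ K : Subgroup G, IsClosed (K : Set G) →
      ∃ k : Fin m → G, (∀ i, k i ∈ K) ∧ (K : Set G) ⊆ ⋃ i, k i • 𝒱 := by
  -- choose a symmetric open neighborhood `U` of `1` with `U * U ⊆ 𝒱`
  obtain ⟨V, hVopen, hV1, hVmul⟩ :=
    exists_open_nhds_one_mul_subset (h𝒱.mem_nhds h1)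
  set U : Set G := V ∩ V⁻¹ with hU
  have hUopen : IsOpen U := hVopen.inter (hVopen.inv)
  have hU1 : (1 : G) ∈ U := ⟨hV1, by simpa using hV1⟩
  have hUsymm : ∀ x ∈ U, x⁻¹ ∈ U := fun x hx => ⟨hx.2, by simpa using hx.1⟩
  have hUU : ∀ x ∈ U, ∀ y ∈ U, x * y ∈ 𝒱 := fun x hx y hy =>
    hVmul (Set.mul_mem_mul hx.1 hy.1)
  -- finite subcover of `G` by translates of `U`
  have hcover : (Set.univ : Set G) ⊆ ⋃ g : G, g • U := fun g _ =>
    Set.mem_iUnion.2 ⟨g, ⟨1, hU1, by simp⟩⟩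
  obtain ⟨t, ht⟩ := isCompact_univ.elim_finite_subcover (fun g : G => g • U)
    (fun g => hUopen.smul g) hcover
  have htne : t.Nonempty := by
    rcases Set.mem_iUnion₂.1 (ht (Set.mem_univ (1 : G))) with ⟨g, hg, -⟩
    exact ⟨g, hg⟩
  refine ⟨t.card, Finset.card_pos.2 htne, fun K _ => ?_⟩
  let e := t.equivFin
  classical
  refine ⟨fun i => if h : ((((e.symm i : t) : G)) • U ∩ (K : Set G)).Nonempty
      then h.choose else 1, fun i => ?_, fun x hx => ?_⟩
  · by_cases h : ((((e.symm i : t) : G)) • U ∩ (K : Set G)).Nonempty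
    · simp only [dif_pos h]; exact h.choose_spec.2
    · simp only [dif_neg h]; exact K.one_mem
  · rcases Set.mem_iUnion₂.1 (ht (Set.mem_univ x)) with ⟨g, hg, hxg⟩
    set i := e ⟨g, hg⟩ with hi
    have hg' : ((e.symm i : t) : G) = g := by rw [hi, Equiv.symm_apply_apply]
    have hne : ((((e.symm i : t) : G)) • U ∩ (K : Set G)).Nonempty := by
      rw [hg']; exact ⟨x, hxg, hx⟩
    refine Set.mem_iUnion.2 ⟨i, ?_⟩
    simp only [dif_pos hne]
    obtain ⟨hkU, hkK⟩ := hne.choose_spec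
    obtain ⟨u₁, hu₁, hk₀⟩ := hkU
    have hk : g • u₁ = hne.choose := by rw [← hg']; exact hk₀
    obtain ⟨u₂, hu₂, hxeq⟩ := hxg
    refine ⟨u₁⁻¹ * u₂, hUU _ (hUsymm _ hu₁) _ hu₂, ?_⟩
    simp only [smul_eq_mul] at hk hxeq ⊢
    rw [← hk, ← hxeq]
    group
end

section
/- Let Ω be a bounded open convex subset of ℝⁿ. The Hilbert distance d_Ω(x,y) = ½ log([a:b:x:y]) for x ≠ y (with d_Ω(x,x) = 0) defines a metric on Ω: it is symmetric, positive for distinct points, and satisfies the triangle inequality. -/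
open Metric

noncomputable section
open scoped Classical

variable {E : Type*} [NormedAddCommGroup E] [NormedSpace ℝ E]

/-- Parameter of the boundary point `a` of the chord through `x, y` lying beyond `y`
(so that `y` is between `x` and `a`). -/
def chordSup (Ω : Set E) (x y : E) : ℝ := sSup {t : ℝ | x + t • (y - x) ∈ Ω}

/-- Parameter of the boundary point `b` of the chord through `x, y` lying behind `x`
(so that `x` is between `b` and `y`). -/
def chordInf (Ω : Set E) (x y : E) : ℝ := sInf {t : ℝ | x + t • (y - x) ∈ Ω}

/-- The boundary point `a` of the chord through `x, y`, with `y` between `x` and `a`. -/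
def chordA (Ω : Set E) (x y : E) : E := x + chordSup Ω x y • (y - x)

/-- The boundary point `b` of the chord through `x, y`, with `x` between `b` and `y`. -/
def chordB (Ω : Set E) (x y : E) : E := x + chordInf Ω x y • (y - x)

/-- The Hilbert distance on a bounded convex open set `Ω`:
`d_Ω(x,y) = ½ log [a:b:x:y]` where `[a:b:x:y] = (‖a-x‖‖b-y‖)/(‖a-y‖‖b-x‖)`. -/
def hilbertDist (Ω : Set E) (x y : E) : ℝ :=
  if x = y then 0 else
    (1 / 2) * Real.log ((dist (chordA Ω x y) x * dist (chordB Ω x y) y) /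
      (dist (chordA Ω x y) y * dist (chordB Ω x y) x))

end

noncomputable section HilbertAux

open scoped Classical

variable {E : Type*} [NormedAddCommGroup E] [NormedSpace ℝ E]

namespace HilbertAux

/-- The parameter set of the chord through `x` and `y`. -/
def chordSet (Ω : Set E) (x y : E) : Set ℝ := {t : ℝ | x + t • (y - x) ∈ Ω}

/-- The Funk weak metric. -/
def funk (Ω : Set E) (x y : E) : ℝ :=
  Real.log (chordSup Ω x y / (chordSup Ω x y - 1))

variable {Ω : Set E} {x y z : E}

lemma zero_mem_chordSet (hx : x ∈ Ω) : (0 : ℝ) ∈ chordSet Ω x y := by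
  simp [chordSet, hx]

lemma one_mem_chordSet (hy : y ∈ Ω) : (1 : ℝ) ∈ chordSet Ω x y := by
  simp [chordSet, hy]

lemma norm_pos_of_ne (hxy : x ≠ y) : (0:ℝ) < ‖y - x‖ := by
  simpa [norm_sub_pos_iff] using (sub_ne_zero.mpr (Ne.symm hxy))

lemma abs_mul_norm_le {R t : ℝ} (hR : ∀ a ∈ Ω, ‖a‖ ≤ R) (ht : t ∈ chordSet Ω x y) :
    |t| * ‖y - x‖ ≤ R + ‖x‖ := by
  have h := hR _ ht
  have he : t • (y - x) = (x + t • (y - x)) - x := by abel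
  calc |t| * ‖y - x‖ = ‖t • (y - x)‖ := by rw [norm_smul, Real.norm_eq_abs]
  _ = ‖(x + t • (y - x)) - x‖ := by rw [← he]
  _ ≤ ‖x + t • (y - x)‖ + ‖x‖ := norm_sub_le _ _
  _ ≤ R + ‖x‖ := by linarith

lemma bddAbove_chordSet (hbdd : Bornology.IsBounded Ω) (hxy : x ≠ y) :
    BddAbove (chordSet Ω x y) := by
  obtain ⟨R, hR⟩ := hbdd.exists_norm_le
  refine ⟨(R + ‖x‖) / ‖y - x‖, fun t ht => ?_⟩
  have hv : (0:ℝ) < ‖y - x‖ := norm_pos_of_ne hxy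
  have h2 := abs_mul_norm_le hR ht
  have h3 : t ≤ |t| := le_abs_self t
  rw [le_div_iff₀ hv]
  nlinarith

lemma bddBelow_chordSet (hbdd : Bornology.IsBounded Ω) (hxy : x ≠ y) :
    BddBelow (chordSet Ω x y) := by
  obtain ⟨R, hR⟩ := hbdd.exists_norm_le
  refine ⟨-((R + ‖x‖) / ‖y - x‖), fun t ht => ?_⟩
  have hv : (0:ℝ) < ‖y - x‖ := norm_pos_of_ne hxy
  have h2 := abs_mul_norm_le hR ht
  have h3 : -t ≤ |t| := neg_le_abs t
  rw [neg_le, le_div_iff₀ hv]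
  nlinarith

lemma isOpen_chordSet (hopen : IsOpen Ω) : IsOpen (chordSet Ω x y) := by
  have hc : Continuous fun t : ℝ => x + t • (y - x) :=
    continuous_const.add (continuous_id.smul continuous_const)
  exact hopen.preimage hc

lemma one_lt_chordSup (hopen : IsOpen Ω) (hbdd : Bornology.IsBounded Ω)
    (hy : y ∈ Ω) (hxy : x ≠ y) : 1 < chordSup Ω x y := by
  have h1 : (1:ℝ) ∈ chordSet Ω x y := one_mem_chordSet hy
  obtain ⟨ε, hε, hball⟩ := Metric.isOpen_iff.1 (isOpen_chordSet (x := x) (y := y) hopen) 1 h1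
  have hmem : (1 + ε/2 : ℝ) ∈ chordSet Ω x y := by
    apply hball
    rw [Metric.mem_ball, Real.dist_eq,
      show (1 + ε/2 - 1 : ℝ) = ε/2 by ring, abs_of_pos (half_pos hε)]
    linarith
  have h2 : (1 + ε/2 : ℝ) ≤ chordSup Ω x y := le_csSup (bddAbove_chordSet hbdd hxy) hmem
  linarith

lemma chordInf_lt_zero (hopen : IsOpen Ω) (hbdd : Bornology.IsBounded Ω)
    (hx : x ∈ Ω) (hxy : x ≠ y) : chordInf Ω x y < 0 := by
  have h0 : (0:ℝ) ∈ chordSet Ω x y := zero_mem_chordSet hx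
  obtain ⟨ε, hε, hball⟩ := Metric.isOpen_iff.1 (isOpen_chordSet (x := x) (y := y) hopen) 0 h0
  have hmem : (-(ε/2) : ℝ) ∈ chordSet Ω x y := by
    apply hball
    rw [Metric.mem_ball, Real.dist_eq,
      show (-(ε/2) - 0 : ℝ) = -(ε/2) by ring, abs_neg, abs_of_pos (half_pos hε)]
    linarith
  have h2 : chordInf Ω x y ≤ -(ε/2) := csInf_le (bddBelow_chordSet hbdd hxy) hmem
  linarith

lemma chordSup_nonneg (hbdd : Bornology.IsBounded Ω) (hx : x ∈ Ω) (hxy : x ≠ y) :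
    0 ≤ chordSup Ω x y :=
  le_csSup (bddAbove_chordSet hbdd hxy) (zero_mem_chordSet hx)

lemma chordA_mem_closure (hbdd : Bornology.IsBounded Ω) (hx : x ∈ Ω) (hxy : x ≠ y) :
    chordA Ω x y ∈ closure Ω := by
  have hne : (chordSet Ω x y).Nonempty := ⟨0, zero_mem_chordSet hx⟩
  have hsup : sSup (chordSet Ω x y) ∈ closure (chordSet Ω x y) :=
    csSup_mem_closure hne (bddAbove_chordSet hbdd hxy)
  have hc : Continuous fun t : ℝ => x + t • (y - x) :=
    continuous_const.add (continuous_id.smul continuous_const)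
  exact map_mem_closure (f := fun t : ℝ => x + t • (y - x)) hc hsup fun t ht => ht

lemma le_chordSup_of_mem_closure (hopen : IsOpen Ω) (hconv : Convex ℝ Ω)
    (hbdd : Bornology.IsBounded Ω) (hx : x ∈ Ω) (hxy : x ≠ y)
    {u : ℝ} (hu0 : 0 ≤ u) (hu : x + u • (y - x) ∈ closure Ω) :
    u ≤ chordSup Ω x y := by
  have hbdA := bddAbove_chordSet (x := x) (y := y) hbdd hxy
  have key : ∀ s : ℝ, 0 < s → s < 1 → s * u ∈ chordSet Ω x y := by
    intro s hs0 hs1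
    have hxint : x ∈ interior Ω := by rwa [hopen.interior_eq]
    have hseg := hconv.openSegment_interior_closure_subset_interior hxint hu
    have hmem : (1 - s) • x + s • (x + u • (y - x)) ∈ interior Ω :=
      hseg ⟨1 - s, s, by linarith, hs0, by ring, rfl⟩
    have heq : (1 - s) • x + s • (x + u • (y - x)) = x + (s * u) • (y - x) := by
      module
    rw [heq, hopen.interior_eq] at hmem
    exact hmem
  rcases eq_or_lt_of_le hu0 with h | h
  · rw [← h]; exact chordSup_nonneg hbdd hx hxy
  · by_contra hcon
    push_neg at hcon
    obtain ⟨c, hc1, hc2⟩ := exists_between hcon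
    have hc0 : 0 < c := lt_of_le_of_lt (chordSup_nonneg hbdd hx hxy) hc1
    have hs1 : c / u < 1 := (div_lt_one h).2 hc2
    have hs0 : 0 < c / u := div_pos hc0 h
    have hcmem := key (c / u) hs0 hs1
    rw [div_mul_cancel₀ _ (ne_of_gt h)] at hcmem
    have : c ≤ chordSup Ω x y := le_csSup hbdA hcmem
    linarith

lemma chordSet_swap : chordSet Ω y x = {t : ℝ | 1 - t ∈ chordSet Ω x y} := by
  ext t
  simp only [chordSet, Set.mem_setOf_eq]
  constructor <;> intro h
  · have heq : x + (1 - t) • (y - x) = y + t • (x - y) := by module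
    rwa [heq]
  · have heq : y + t • (x - y) = x + (1 - t) • (y - x) := by module
    rwa [heq]

lemma sSup_one_sub {S : Set ℝ} (hne : S.Nonempty) (hbd : BddBelow S) :
    sSup {t : ℝ | 1 - t ∈ S} = 1 - sInf S := by
  obtain ⟨s₀, hs₀⟩ := hne
  obtain ⟨b, hb⟩ := hbd
  have hTne : {t : ℝ | 1 - t ∈ S}.Nonempty := ⟨1 - s₀, by simpa using hs₀⟩
  have hTbd : BddAbove {t : ℝ | 1 - t ∈ S} := by
    refine ⟨1 - b, fun t ht => ?_⟩
    have := hb ht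
    linarith
  apply le_antisymm
  · apply csSup_le hTne
    intro t ht
    have : sInf S ≤ 1 - t := csInf_le ⟨b, hb⟩ ht
    linarith
  · rw [sub_le_iff_le_add]
    have : 1 - sSup {t : ℝ | 1 - t ∈ S} ≤ sInf S := by
      apply le_csInf ⟨s₀, hs₀⟩
      intro s hs
      have hmem : (1 - s) ∈ {t : ℝ | 1 - t ∈ S} := by simpa using hs
      have := le_csSup hTbd hmem
      linarith
    linarith

lemma chordSup_swap (hbdd : Bornology.IsBounded Ω) (hx : x ∈ Ω) (hxy : x ≠ y) :
    chordSup Ω y x = 1 - chordInf Ω x y := by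
  have h : chordSup Ω y x = sSup (chordSet Ω y x) := rfl
  rw [h, chordSet_swap]
  exact sSup_one_sub ⟨0, zero_mem_chordSet hx⟩ (bddBelow_chordSet hbdd hxy)

lemma hilbertDist_eq_funk (hopen : IsOpen Ω) (hbdd : Bornology.IsBounded Ω)
    (hx : x ∈ Ω) (hy : y ∈ Ω) (hxy : x ≠ y) :
    hilbertDist Ω x y = (1 / 2) * (funk Ω x y + funk Ω y x) := by
  have hT : 1 < chordSup Ω x y := one_lt_chordSup hopen hbdd hy hxy
  have hm : chordInf Ω x y < 0 := chordInf_lt_zero hopen hbdd hx hxy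
  set T := chordSup Ω x y with hTdef
  set m := chordInf Ω x y with hmdef
  have hv : (0:ℝ) < ‖y - x‖ := norm_pos_of_ne hxy
  have dAx : dist (chordA Ω x y) x = T * ‖y - x‖ := by
    rw [dist_eq_norm]
    have h : chordA Ω x y - x = T • (y - x) := by rw [chordA]; abel
    rw [h, norm_smul, Real.norm_eq_abs, abs_of_pos (by linarith)]
  have dAy : dist (chordA Ω x y) y = (T - 1) * ‖y - x‖ := by
    rw [dist_eq_norm]
    have h : chordA Ω x y - y = (T - 1) • (y - x) := by rw [chordA]; module
    rw [h, norm_smul, Real.norm_eq_abs, abs_of_pos (by linarith)]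
  have dBy : dist (chordB Ω x y) y = (1 - m) * ‖y - x‖ := by
    rw [dist_eq_norm]
    have h : chordB Ω x y - y = (m - 1) • (y - x) := by rw [chordB]; module
    rw [h, norm_smul, Real.norm_eq_abs, abs_of_neg (by linarith)]
    ring
  have dBx : dist (chordB Ω x y) x = (-m) * ‖y - x‖ := by
    rw [dist_eq_norm]
    have h : chordB Ω x y - x = m • (y - x) := by rw [chordB]; abel
    rw [h, norm_smul, Real.norm_eq_abs, abs_of_neg hm]
  have hvv : ‖y - x‖ * ‖y - x‖ ≠ 0 := by positivity
  have hratio : (dist (chordA Ω x y) x * dist (chordB Ω x y) y) /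
      (dist (chordA Ω x y) y * dist (chordB Ω x y) x)
      = (T / (T - 1)) * ((1 - m) / (-m)) := by
    rw [dAx, dAy, dBy, dBx, div_mul_div_comm,
      show T * ‖y - x‖ * ((1 - m) * ‖y - x‖) = T * (1 - m) * (‖y - x‖ * ‖y - x‖) from by
        ring,
      show (T - 1) * ‖y - x‖ * (-m * ‖y - x‖) = (T - 1) * (-m) * (‖y - x‖ * ‖y - x‖) from by
        ring,
      mul_div_mul_right _ _ hvv]
  have hfyx : funk Ω y x = Real.log ((1 - m) / (-m)) := by
    rw [funk, chordSup_swap hbdd hx hxy, ← hmdef, show (1 - m) - 1 = -m from by ring]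
  have hTpos : 0 < T / (T - 1) := div_pos (by linarith) (by linarith)
  have hmpos : 0 < (1 - m) / (-m) := div_pos (by linarith) (by linarith)
  rw [hilbertDist, if_neg hxy, hratio, funk, hfyx, ← hTdef,
    Real.log_mul (ne_of_gt hTpos) (ne_of_gt hmpos)]

lemma funk_pos (hopen : IsOpen Ω) (hbdd : Bornology.IsBounded Ω)
    (hy : y ∈ Ω) (hxy : x ≠ y) : 0 < funk Ω x y := by
  have hT : 1 < chordSup Ω x y := one_lt_chordSup hopen hbdd hy hxy
  rw [funk]
  apply Real.log_pos
  rw [lt_div_iff₀ (by linarith)]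
  linarith

lemma funk_triangle (hopen : IsOpen Ω) (hconv : Convex ℝ Ω)
    (hbdd : Bornology.IsBounded Ω) (hx : x ∈ Ω) (hy : y ∈ Ω) (hz : z ∈ Ω)
    (hxy : x ≠ y) (hyz : y ≠ z) (hxz : x ≠ z) :
    funk Ω x z ≤ funk Ω x y + funk Ω y z := by
  set T₁ := chordSup Ω x y with hT₁def
  set T₂ := chordSup Ω y z with hT₂def
  set T₃ := chordSup Ω x z with hT₃def
  have hT₁ : 1 < T₁ := one_lt_chordSup hopen hbdd hy hxy
  have hT₂ : 1 < T₂ := one_lt_chordSup hopen hbdd hz hyz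
  have hT₃ : 1 < T₃ := one_lt_chordSup hopen hbdd hz hxz
  set D : ℝ := T₁ + T₂ - 1 with hDdef
  have hD : (0:ℝ) < D := by rw [hDdef]; linarith
  have hD' : D ≠ 0 := ne_of_gt hD
  have hDne : T₁ + T₂ - 1 ≠ 0 := by rw [← hDdef]; exact hD'
  set u : ℝ := T₁ * T₂ / D with hudef
  have hu1 : 1 < u := by
    rw [hudef, lt_div_iff₀ hD, hDdef]
    nlinarith
  have hp : chordA Ω x y ∈ closure Ω := chordA_mem_closure hbdd hx hxy
  have hq : chordA Ω y z ∈ closure Ω := chordA_mem_closure hbdd hy hyz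
  -- the point x + u • (z - x) is a convex combination of the two boundary points
  have hcomb : x + u • (z - x) =
      ((T₂ - 1) / D) • chordA Ω x y + (T₁ / D) • chordA Ω y z := by
    rw [chordA, chordA, ← hT₁def, ← hT₂def, hudef, hDdef]
    match_scalars <;> field_simp <;> ring
  have hr : x + u • (z - x) ∈ closure Ω := by
    rw [hcomb]
    exact hconv.closure hp hq (div_pos (by linarith) hD).le (div_pos (by linarith) hD).le
      (by rw [← add_div, hDdef, div_eq_one_iff_eq hDne]; ring)
  have huT₃ : u ≤ T₃ :=
    le_chordSup_of_mem_closure hopen hconv hbdd hx hxz (by linarith) hr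
  have hmono : T₃ / (T₃ - 1) ≤ u / (u - 1) := by
    rw [div_le_div_iff₀ (by linarith) (by linarith)]
    nlinarith
  have h1 : T₁ - 1 ≠ 0 := ne_of_gt (by linarith)
  have h2 : T₂ - 1 ≠ 0 := ne_of_gt (by linarith)
  have hval : u / (u - 1) = (T₁ / (T₁ - 1)) * (T₂ / (T₂ - 1)) := by
    rw [hudef, hDdef]
    have h4 : T₁ * T₂ / (T₁ + T₂ - 1) - 1 = (T₁ - 1) * (T₂ - 1) / (T₁ + T₂ - 1) := by
      field_simp; ring
    rw [h4, div_div_div_cancel_right₀ hDne, div_mul_div_comm]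
  calc funk Ω x z = Real.log (T₃ / (T₃ - 1)) := rfl
  _ ≤ Real.log (u / (u - 1)) :=
      Real.log_le_log (div_pos (by linarith) (by linarith)) hmono
  _ = Real.log (T₁ / (T₁ - 1)) + Real.log (T₂ / (T₂ - 1)) := by
      rw [hval, Real.log_mul (ne_of_gt (div_pos (by linarith) (by linarith)))
        (ne_of_gt (div_pos (by linarith) (by linarith)))]
  _ = funk Ω x y + funk Ω y z := rfl

end HilbertAux

end HilbertAux

open HilbertAux in
/-- For a bounded open convex `Ω ⊆ ℝⁿ`, the Hilbert distance is a metric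
on `Ω`: it vanishes on the diagonal, is symmetric, positive for distinct points, and
satisfies the triangle inequality. -/
theorem stmt_7 (n : ℕ) (Ω : Set (EuclideanSpace ℝ (Fin n)))
    (hopen : IsOpen Ω) (hconv : Convex ℝ Ω) (hbdd : Bornology.IsBounded Ω) :
    (∀ x ∈ Ω, hilbertDist Ω x x = 0) ∧
    (∀ x ∈ Ω, ∀ y ∈ Ω, hilbertDist Ω x y = hilbertDist Ω y x) ∧
    (∀ x ∈ Ω, ∀ y ∈ Ω, x ≠ y → 0 < hilbertDist Ω x y) ∧
    (∀ x ∈ Ω, ∀ y ∈ Ω, ∀ z ∈ Ω,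
      hilbertDist Ω x z ≤ hilbertDist Ω x y + hilbertDist Ω y z) := by
  have hdiag : ∀ x ∈ Ω, hilbertDist Ω x x = 0 := fun x _ => by simp [hilbertDist]
  have hpos : ∀ x ∈ Ω, ∀ y ∈ Ω, x ≠ y → 0 < hilbertDist Ω x y := by
    intro x hx y hy hxy
    rw [hilbertDist_eq_funk hopen hbdd hx hy hxy]
    have h1 := funk_pos hopen hbdd hy hxy
    have h2 := funk_pos hopen hbdd hx (Ne.symm hxy)
    linarith
  have hsymm : ∀ x ∈ Ω, ∀ y ∈ Ω, hilbertDist Ω x y = hilbertDist Ω y x := by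
    intro x hx y hy
    by_cases hxy : x = y
    · subst hxy; rfl
    · rw [hilbertDist_eq_funk hopen hbdd hx hy hxy,
        hilbertDist_eq_funk hopen hbdd hy hx (Ne.symm hxy)]
      ring
  refine ⟨hdiag, hsymm, hpos, ?_⟩
  intro x hx y hy z hz
  by_cases hxz : x = z
  · subst hxz
    rw [hdiag x hx]
    by_cases hxy : x = y
    · subst hxy; simp [hdiag x hx]
    · have h1 := hpos x hx y hy hxy
      have h2 := hpos y hy x hx (Ne.symm hxy)
      linarith
  by_cases hxy : x = y
  · subst hxy; rw [hdiag x hx]; simp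
  by_cases hyz : y = z
  · subst hyz; rw [hdiag y hy]; simp
  rw [hilbertDist_eq_funk hopen hbdd hx hz hxz,
    hilbertDist_eq_funk hopen hbdd hx hy hxy,
    hilbertDist_eq_funk hopen hbdd hy hz hyz]
  have h1 := funk_triangle hopen hconv hbdd hx hy hz hxy hyz hxz
  have h2 := funk_triangle hopen hconv hbdd hz hy hx (Ne.symm hyz) (Ne.symm hxy)
    (Ne.symm hxz)
  linarith
end

section
/- Let Ω be a bounded open convex subset of Euclidean ℝⁿ whose center of mass is the origin. Then there exists a unique centered ellipsoid ℰ (the inertia ellipsoid of Ω) such that for every linear functional ψ : ℝⁿ → ℝ, ∫_Ω ψ(x)² dx = ∫_ℰ ψ(x)² dx. Equivalently, the positive-definite symmetric matrices of second moments M_Ω = ∫_Ω x xᵀ dx and M_ℰ agree. -/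
open MeasureTheory Metric
variable {n : ℕ}



noncomputable def QF (S : Set (EuclideanSpace ℝ (Fin n))) (c : Fin n → ℝ) : ℝ :=
  ∫ x in S, (∑ i, c i * x i) ^ 2

lemma euclid_sum_apply (f : Fin n → EuclideanSpace ℝ (Fin n)) (j : Fin n) :
    (∑ i, f i) j = ∑ i, f i j := by
  rw [WithLp.ofLp_sum, Finset.sum_apply]

lemma lin_repr (ψ : EuclideanSpace ℝ (Fin n) →ₗ[ℝ] ℝ) (x : EuclideanSpace ℝ (Fin n)) :
    ψ x = ∑ i, ψ (EuclideanSpace.single i 1) * x i := by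
  have hx : x = ∑ i, x i • EuclideanSpace.single i (1:ℝ) := by
    ext j
    rw [euclid_sum_apply]
    simp [EuclideanSpace.single_apply]
  conv_lhs => rw [hx]
  rw [map_sum]
  congr 1; ext i
  rw [LinearMap.map_smul]
  simp [mul_comm]

lemma integrableOn_of_cont {S : Set (EuclideanSpace ℝ (Fin n))} (hS : MeasurableSet S)
    (hB : Bornology.IsBounded S) (f : EuclideanSpace ℝ (Fin n) → ℝ) (hf : Continuous f) :
    IntegrableOn f S := by
  obtain ⟨C, hC⟩ := hB.isCompact_closure.exists_bound_of_continuousOn hf.continuousOn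
  apply Measure.integrableOn_of_bounded (M := C) hB.measure_lt_top.ne
    hf.aestronglyMeasurable
  filter_upwards [self_mem_ae_restrict hS] with x hx
  exact hC x (subset_closure hx)

lemma cont_coord (i : Fin n) : Continuous (fun x : EuclideanSpace ℝ (Fin n) => x i) :=
  (PiLp.proj (𝕜 := ℝ) 2 (fun _ : Fin n => ℝ) i).continuous

lemma QF_eq {S : Set (EuclideanSpace ℝ (Fin n))} (hS : MeasurableSet S)
    (hB : Bornology.IsBounded S) (c : Fin n → ℝ) :
    QF S c = ∑ i, ∑ j, c i * c j * ∫ x in S, x i * x j := by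
  have h1 : ∀ x : EuclideanSpace ℝ (Fin n),
      (∑ i, c i * x i) ^ 2 = ∑ i, ∑ j, c i * c j * (x i * x j) := by
    intro x
    rw [sq, Finset.sum_mul_sum]
    exact Finset.sum_congr rfl fun i _ => Finset.sum_congr rfl fun j _ => by ring
  unfold QF
  rw [integral_congr_ae (Filter.Eventually.of_forall h1)]
  rw [integral_finset_sum]
  · refine Finset.sum_congr rfl fun i _ => ?_
    rw [integral_finset_sum]
    · exact Finset.sum_congr rfl fun j _ => by
        rw [integral_const_mul]
    · intro j _
      exact (integrableOn_of_cont hS hB _ (((cont_coord i).mul (cont_coord j)))).const_mul _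
  · intro i _
    apply integrable_finset_sum
    intro j _
    exact (integrableOn_of_cont hS hB _ (((cont_coord i).mul (cont_coord j)))).const_mul _

lemma QF_pos {S : Set (EuclideanSpace ℝ (Fin n))} (hS : IsOpen S) (hne : S.Nonempty)
    (hB : Bornology.IsBounded S) {c : Fin n → ℝ} (hc : c ≠ 0) : 0 < QF S c := by
  set f : EuclideanSpace ℝ (Fin n) → ℝ := fun x => (∑ i, c i * x i) ^ 2 with hf
  have hfc : Continuous f := by
    apply Continuous.pow
    exact continuous_finset_sum _ fun i _ => (continuous_const.mul (cont_coord i))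
  have hnn : 0 ≤ᵐ[volume.restrict S] f := Filter.Eventually.of_forall fun x => sq_nonneg _
  rw [QF, setIntegral_pos_iff_support_of_nonneg_ae hnn
    (integrableOn_of_cont hS.measurableSet hB f hfc)]
  -- kernel has measure zero
  obtain ⟨i0, hi0⟩ : ∃ i, c i ≠ 0 := by
    by_contra h
    push_neg at h
    exact hc (funext h)
  set K : Submodule ℝ (EuclideanSpace ℝ (Fin n)) :=
    LinearMap.ker (∑ i, c i • (PiLp.projₗ (𝕜 := ℝ) 2 (fun _ : Fin n => ℝ) i)) with hK
  have hKapp : ∀ x : EuclideanSpace ℝ (Fin n),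
      (∑ i, c i • (PiLp.projₗ (𝕜 := ℝ) 2 (fun _ : Fin n => ℝ) i)) x = ∑ i, c i * x i := by
    intro x
    simp [LinearMap.sum_apply, PiLp.projₗ]
  have hKne : K ≠ ⊤ := by
    intro h
    have := h ▸ Submodule.mem_top (x := EuclideanSpace.single i0 (1:ℝ)) (R := ℝ)
    have h2 : (∑ i, c i * (EuclideanSpace.single i0 (1:ℝ)) i) = 0 := by
      rw [← hKapp]
      exact this
    rw [Finset.sum_eq_single i0 (fun j _ hj => by
      simp [EuclideanSpace.single_apply, hj]) (by simp)] at h2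
    simp [EuclideanSpace.single_apply] at h2
    exact hi0 h2
  have hker : volume (S \ Function.support f) = 0 := by
    apply measure_mono_null _ (Measure.addHaar_submodule volume K hKne)
    intro x hx
    have : f x = 0 := by
      by_contra h
      exact hx.2 h
    have : (∑ i, c i * x i) = 0 := by
      rw [hf] at this
      exact pow_eq_zero_iff (n := 2) (by norm_num) |>.mp this
    rw [SetLike.mem_coe, hK, LinearMap.mem_ker, hKapp]
    exact this
  have hSpos : 0 < volume S := hS.measure_pos volume hne
  have : volume S ≤ volume (Function.support f ∩ S) + volume (S \ Function.support f) := by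
    rw [Set.inter_comm]
    refine (measure_mono ?_).trans (measure_union_le _ _)
    intro x hx
    by_cases h : x ∈ Function.support f
    · exact Set.mem_union_left _ ⟨hx, h⟩
    · exact Set.mem_union_right _ ⟨hx, h⟩
  rw [hker, add_zero] at this
  exact lt_of_lt_of_le hSpos this


lemma integral_ball_comp_isometry (e : EuclideanSpace ℝ (Fin n) ≃ₗᵢ[ℝ] EuclideanSpace ℝ (Fin n))
    (g : EuclideanSpace ℝ (Fin n) → ℝ) :
    ∫ x in ball (0 : EuclideanSpace ℝ (Fin n)) 1, g x = ∫ x in ball 0 1, g (e x) := by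
  have hpre : e ⁻¹' (ball (0 : EuclideanSpace ℝ (Fin n)) 1) = ball 0 1 := by
    ext x
    simp [mem_ball_zero_iff, e.norm_map]
  rw [← e.measurePreserving.setIntegral_preimage_emb e.toHomeomorph.measurableEmbedding g
    (ball 0 1), hpre]

noncomputable def negI (i : Fin n) :
    EuclideanSpace ℝ (Fin n) ≃ₗᵢ[ℝ] EuclideanSpace ℝ (Fin n) :=
  LinearIsometryEquiv.piLpCongrRight 2
    (fun j => if j = i then LinearIsometryEquiv.neg ℝ else LinearIsometryEquiv.refl ℝ ℝ)

lemma negI_apply_same (i : Fin n) (x : EuclideanSpace ℝ (Fin n)) : (negI i x) i = -(x i) := by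
  simp [negI, LinearIsometryEquiv.piLpCongrRight_apply]

lemma negI_apply_ne {i j : Fin n} (h : j ≠ i) (x : EuclideanSpace ℝ (Fin n)) :
    (negI i x) j = x j := by
  simp [negI, LinearIsometryEquiv.piLpCongrRight_apply, h]

lemma ball_moment_offdiag {i j : Fin n} (h : i ≠ j) :
    ∫ x in ball (0 : EuclideanSpace ℝ (Fin n)) 1, x i * x j = 0 := by
  have := integral_ball_comp_isometry (negI i) (fun x => x i * x j)
  simp only [negI_apply_same, negI_apply_ne (Ne.symm h)] at this
  have h2 : ∫ x in ball (0 : EuclideanSpace ℝ (Fin n)) 1, -(x i) * x j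
      = - ∫ x in ball (0 : EuclideanSpace ℝ (Fin n)) 1, x i * x j := by
    rw [← integral_neg]
    congr 1
    ext x
    ring
  rw [h2] at this
  linarith

lemma ball_moment_diag (i j : Fin n) :
    ∫ x in ball (0 : EuclideanSpace ℝ (Fin n)) 1, x i * x i
      = ∫ x in ball (0 : EuclideanSpace ℝ (Fin n)) 1, x j * x j := by
  have := integral_ball_comp_isometry
    (LinearIsometryEquiv.piLpCongrLeft 2 ℝ ℝ (Equiv.swap i j)) (fun x => x i * x i)
  rw [this]
  congr 1
  ext x
  rw [LinearIsometryEquiv.piLpCongrLeft_apply]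
  simp [Equiv.piCongrLeft']


noncomputable def piE : EuclideanSpace ℝ (Fin n) ≃ₗ[ℝ] (Fin n → ℝ) :=
  WithLp.linearEquiv 2 ℝ (Fin n → ℝ)

noncomputable def matOf (A : EuclideanSpace ℝ (Fin n) ≃ₗ[ℝ] EuclideanSpace ℝ (Fin n)) :
    Matrix (Fin n) (Fin n) ℝ :=
  LinearMap.toMatrix' (piE.toLinearMap ∘ₗ A.toLinearMap ∘ₗ piE.symm.toLinearMap)

lemma matOf_mulVec (A : EuclideanSpace ℝ (Fin n) ≃ₗ[ℝ] EuclideanSpace ℝ (Fin n))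
    (x : EuclideanSpace ℝ (Fin n)) (i : Fin n) :
    (matOf A).mulVec (piE x) i = (A x) i := by
  rw [← Matrix.toLin'_apply, matOf, Matrix.toLin'_toMatrix']
  simp [piE]

lemma matOf_entry (A : EuclideanSpace ℝ (Fin n) ≃ₗ[ℝ] EuclideanSpace ℝ (Fin n)) (i j : Fin n) :
    matOf A i j = (A (EuclideanSpace.single j 1)) i := by
  rw [matOf, LinearMap.toMatrix'_apply]
  simp only [LinearMap.coe_comp, LinearEquiv.coe_coe, Function.comp_apply]
  have h : piE.symm (Pi.single j (1:ℝ))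
      = EuclideanSpace.single j (1:ℝ) := by
    ext k
    simp [piE, EuclideanSpace.single_apply]
  rw [h]
  rfl

lemma matOf_det (A : EuclideanSpace ℝ (Fin n) ≃ₗ[ℝ] EuclideanSpace ℝ (Fin n)) :
    (matOf A).det = LinearMap.det (A.toLinearMap) := by
  rw [matOf, LinearMap.det_toMatrix']
  exact LinearMap.det_conj A.toLinearMap piE

lemma matOf_comp (A B : EuclideanSpace ℝ (Fin n) ≃ₗ[ℝ] EuclideanSpace ℝ (Fin n)) :
    matOf (A.trans B) = matOf B * matOf A := by
  rw [matOf, matOf, matOf, ← LinearMap.toMatrix'_comp]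
  congr 1

lemma matOf_id : matOf (LinearEquiv.refl ℝ (EuclideanSpace ℝ (Fin n))) = 1 := by
  rw [matOf]
  have : piE.toLinearMap ∘ₗ (LinearEquiv.refl ℝ (EuclideanSpace ℝ (Fin n))).toLinearMap ∘ₗ
      piE.symm.toLinearMap = LinearMap.id := by
    ext x
    simp
  rw [this, LinearMap.toMatrix'_id]

lemma matOf_det_ne_zero (A : EuclideanSpace ℝ (Fin n) ≃ₗ[ℝ] EuclideanSpace ℝ (Fin n)) :
    (matOf A).det ≠ 0 := by
  rw [matOf_det]
  exact A.isUnit_det'.ne_zero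

lemma matOf_symm (A : EuclideanSpace ℝ (Fin n) ≃ₗ[ℝ] EuclideanSpace ℝ (Fin n)) :
    matOf A.symm = (matOf A)⁻¹ := by
  symm
  apply Matrix.inv_eq_left_inv
  rw [← matOf_comp]
  have : A.trans A.symm = LinearEquiv.refl ℝ (EuclideanSpace ℝ (Fin n)) := by
    ext x; simp
  rw [this, matOf_id]

noncomputable def matE (P : Matrix (Fin n) (Fin n) ℝ) (h : Invertible P) :
    EuclideanSpace ℝ (Fin n) ≃ₗ[ℝ] EuclideanSpace ℝ (Fin n) :=
  (piE : EuclideanSpace ℝ (Fin n) ≃ₗ[ℝ] (Fin n → ℝ)).trans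
    ((P.toLinearEquiv' h).trans piE.symm)

lemma matOf_matE (P : Matrix (Fin n) (Fin n) ℝ) (h : Invertible P) :
    matOf (matE P h) = P := by
  rw [matOf]
  have : piE.toLinearMap ∘ₗ (matE P h).toLinearMap ∘ₗ piE.symm.toLinearMap
      = Matrix.toLin' P := by
    ext x
    simp [matE, piE, Matrix.toLinearEquiv']
  rw [this, LinearMap.toMatrix'_toLin']
open scoped Matrix

lemma swap_sum (c x : Fin n → ℝ) (P : Matrix (Fin n) (Fin n) ℝ) :
    ∑ i, c i * ∑ j, P i j * x j = ∑ j, (∑ i, c i * P i j) * x j := by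
  simp_rw [Finset.mul_sum, Finset.sum_mul]
  rw [Finset.sum_comm]
  exact Finset.sum_congr rfl fun j _ => Finset.sum_congr rfl fun i _ => by ring

lemma QF_image (A : EuclideanSpace ℝ (Fin n) ≃ₗ[ℝ] EuclideanSpace ℝ (Fin n))
    {s : Set (EuclideanSpace ℝ (Fin n))} (hs : MeasurableSet s) (c : Fin n → ℝ) :
    QF (A '' s) c = |(matOf A).det| * QF s (fun j => ∑ i, c i * matOf A i j) := by
  classical
  set f' := LinearMap.toContinuousLinearMap A.toLinearMap with hf'
  have hcoe : (f' : EuclideanSpace ℝ (Fin n) → EuclideanSpace ℝ (Fin n)) = A :=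
    LinearMap.coe_toContinuousLinearMap' _
  have hd : ∀ x ∈ s, HasFDerivWithinAt (⇑A) f' s x := by
    intro x _
    have h1 := f'.hasFDerivAt (x := x)
    rw [hcoe] at h1
    exact h1.hasFDerivWithinAt
  have himg := integral_image_eq_integral_abs_det_fderiv_smul volume hs hd
    A.injective.injOn (fun x => (∑ i, c i * x i)^2)
  have hdet : f'.det = (matOf A).det := by
    rw [ContinuousLinearMap.det, matOf_det]
    congr 1
  rw [QF, himg, QF, ← integral_const_mul]
  congr 1
  ext x
  rw [hdet, smul_eq_mul]
  congr 1
  have hAx : ∀ i, (A x) i = ∑ j, matOf A i j * x j := by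
    intro i
    rw [← matOf_mulVec A x i]
    simp [Matrix.mulVec, dotProduct, piE]
  simp_rw [hAx]
  rw [swap_sum]

lemma qf_expand (N : Matrix (Fin n) (Fin n) ℝ) (c : Fin n → ℝ) :
    c ⬝ᵥ N.mulVec c = ∑ i, ∑ j, c i * c j * N i j := by
  simp only [dotProduct, Matrix.mulVec, Finset.mul_sum]
  exact Finset.sum_congr rfl fun i _ => Finset.sum_congr rfl fun j _ => by ring

lemma sum_sq_eq (P : Matrix (Fin n) (Fin n) ℝ) (c : Fin n → ℝ) :
    ∑ j, (∑ i, c i * P i j)^2 = c ⬝ᵥ (P * Pᵀ).mulVec c := by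
  rw [qf_expand]
  simp_rw [Matrix.mul_apply, Matrix.transpose_apply, Finset.mul_sum, sq, Finset.sum_mul_sum]
  rw [Finset.sum_comm]
  refine Finset.sum_congr rfl fun i _ => ?_
  rw [Finset.sum_comm]
  exact Finset.sum_congr rfl fun k _ => Finset.sum_congr rfl fun j _ => by ring

lemma QF_ball (hn : 1 ≤ n) : ∃ κ : ℝ, 0 < κ ∧ ∀ c : Fin n → ℝ,
    QF (ball (0 : EuclideanSpace ℝ (Fin n)) 1) c = κ * ∑ i, c i ^ 2 := by
  classical
  set i0 : Fin n := ⟨0, hn⟩ with hi0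
  set κ := ∫ x in ball (0 : EuclideanSpace ℝ (Fin n)) 1, x i0 * x i0 with hκdef
  have hκc : ∀ i, ∫ x in ball (0 : EuclideanSpace ℝ (Fin n)) 1, x i * x i = κ :=
    fun i => ball_moment_diag i i0
  have hball_meas : MeasurableSet (ball (0 : EuclideanSpace ℝ (Fin n)) 1) :=
    measurableSet_ball
  have hballb : Bornology.IsBounded (ball (0 : EuclideanSpace ℝ (Fin n)) 1) := isBounded_ball
  have hpos : 0 < κ := by
    have hQ := QF_pos (S := ball (0 : EuclideanSpace ℝ (Fin n)) 1) isOpen_ball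
      (nonempty_ball.mpr one_pos) hballb (c := (Pi.single i0 1 : Fin n → ℝ)) (by
        intro h
        have := congrFun h i0
        simp at this)
    rw [QF] at hQ
    have heq : ∀ x : EuclideanSpace ℝ (Fin n),
        (∑ i, (Pi.single i0 (1:ℝ) : Fin n → ℝ) i * x i)^2 = x i0 * x i0 := by
      intro x
      rw [Finset.sum_eq_single i0]
      · simp [sq]
      · intro j _ hj
        simp [Pi.single_apply, hj]
      · simp
    rwa [integral_congr_ae (Filter.Eventually.of_forall heq)] at hQ
  refine ⟨κ, hpos, fun c => ?_⟩
  rw [QF_eq hball_meas hballb, Finset.mul_sum]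
  refine Finset.sum_congr rfl fun i _ => ?_
  rw [Finset.sum_eq_single i]
  · rw [hκc i]; ring
  · intro j _ hj
    rw [ball_moment_offdiag (Ne.symm hj), mul_zero]
  · simp

lemma sym_matrix_eq {N N' : Matrix (Fin n) (Fin n) ℝ} (hN : Nᵀ = N) (hN' : N'ᵀ = N')
    (h : ∀ c : Fin n → ℝ, c ⬝ᵥ N.mulVec c = c ⬝ᵥ N'.mulVec c) : N = N' := by
  classical
  ext i j
  have hii := h (Pi.single i 1)
  have hjj := h (Pi.single j 1)
  have hij := h (Pi.single i 1 + Pi.single j 1)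
  simp only [Matrix.mulVec_add, dotProduct_add, add_dotProduct,
    Matrix.mulVec_single, MulOpposite.op_one, one_smul, mul_one] at hii hjj hij
  have e1 : ∀ (M : Matrix (Fin n) (Fin n) ℝ) (a b : Fin n),
      (Pi.single a (1:ℝ)) ⬝ᵥ M.col b = M a b := by
    intro M a b
    rw [single_dotProduct, one_mul, Matrix.col_apply]
  simp only [e1] at hii hjj hij
  have hNji : N j i = N i j := by
    conv_lhs => rw [← hN]
    rw [Matrix.transpose_apply]
  have hN'ji : N' j i = N' i j := by
    conv_lhs => rw [← hN']
    rw [Matrix.transpose_apply]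
  linarith

lemma ellipsoid_eq (hn : 1 ≤ n)
    (A A' : EuclideanSpace ℝ (Fin n) ≃ₗ[ℝ] EuclideanSpace ℝ (Fin n))
    (h : ∀ c : Fin n → ℝ, QF (A '' ball 0 1) c = QF (A' '' ball 0 1) c) :
    A '' ball 0 1 = A' '' ball 0 1 := by
  classical
  obtain ⟨κ, hκ, hQB⟩ := QF_ball hn
  set P := matOf A with hP
  set P' := matOf A' with hP'
  have hPdet : P.det ≠ 0 := matOf_det_ne_zero A
  have hP'det : P'.det ≠ 0 := matOf_det_ne_zero A'
  have key : ((|P.det| * κ) • (P * Pᵀ)) = ((|P'.det| * κ) • (P' * P'ᵀ)) := by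
    apply sym_matrix_eq
    · rw [Matrix.transpose_smul, Matrix.transpose_mul, Matrix.transpose_transpose]
    · rw [Matrix.transpose_smul, Matrix.transpose_mul, Matrix.transpose_transpose]
    · intro c
      have h1 := h c
      rw [QF_image A measurableSet_ball c, QF_image A' measurableSet_ball c,
        hQB, hQB] at h1
      rw [sum_sq_eq, sum_sq_eq] at h1
      simp only [← hP, ← hP'] at h1
      have e3 : ∀ (a : ℝ) (M : Matrix (Fin n) (Fin n) ℝ),
          c ⬝ᵥ ((a • M).mulVec c) = a * (c ⬝ᵥ M.mulVec c) := by
        intro a M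
        rw [Matrix.smul_mulVec, dotProduct_smul, smul_eq_mul]
      rw [e3, e3, mul_assoc, mul_assoc]
      exact h1
  have hdet_eq : |P.det| = |P'.det| := by
    have hd := congrArg Matrix.det key
    rw [Matrix.det_smul, Matrix.det_smul, Matrix.det_mul, Matrix.det_mul,
      Matrix.det_transpose, Matrix.det_transpose, Fintype.card_fin] at hd
    have l1 : ∀ d : ℝ, (|d| * κ)^n * (d * d) = κ^n * |d|^(n+2) := by
      intro d
      rw [← abs_mul_abs_self d, mul_pow]
      ring
    rw [l1, l1] at hd
    have h2 := mul_left_cancel₀ (pow_ne_zero n hκ.ne') hd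
    exact (pow_left_inj₀ (abs_nonneg _) (abs_nonneg _) (by omega)).mp h2
  have hPPt : P * Pᵀ = P' * P'ᵀ := by
    have hne : (|P.det| * κ) ≠ 0 := mul_ne_zero (abs_ne_zero.mpr hPdet) hκ.ne'
    rw [← hdet_eq] at key
    exact smul_right_injective (Matrix (Fin n) (Fin n) ℝ) hne key
  set U := A.trans A'.symm with hU
  have hQmat : matOf U = P'⁻¹ * P := by
    rw [hU, matOf_comp, matOf_symm]
  have hunit' : IsUnit P'.det := isUnit_iff_ne_zero.mpr hP'det
  have hunit't : IsUnit P'ᵀ.det := by rw [Matrix.det_transpose]; exact hunit'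
  have hQQt : (matOf U) * (matOf U)ᵀ = 1 := by
    rw [hQmat, Matrix.transpose_mul, Matrix.transpose_nonsing_inv]
    calc P'⁻¹ * P * (Pᵀ * (P'ᵀ)⁻¹) = P'⁻¹ * (P * Pᵀ) * (P'ᵀ)⁻¹ := by
          rw [Matrix.mul_assoc, Matrix.mul_assoc, Matrix.mul_assoc]
      _ = P'⁻¹ * (P' * P'ᵀ) * (P'ᵀ)⁻¹ := by rw [hPPt]
      _ = (P'⁻¹ * P') * (P'ᵀ * (P'ᵀ)⁻¹) := by
          rw [Matrix.mul_assoc, Matrix.mul_assoc, Matrix.mul_assoc]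
      _ = 1 := by rw [Matrix.nonsing_inv_mul _ hunit', Matrix.mul_nonsing_inv _ hunit't, one_mul]
  have hQtQ : (matOf U)ᵀ * matOf U = 1 := mul_eq_one_comm.mp hQQt
  have hdot : ∀ x : EuclideanSpace ℝ (Fin n), ∀ Q : Matrix (Fin n) (Fin n) ℝ,
      Q.mulVec (piE x) ⬝ᵥ Q.mulVec (piE x) = piE x ⬝ᵥ (Qᵀ * Q).mulVec (piE x) := by
    intro x Q
    rw [Matrix.dotProduct_mulVec, ← Matrix.mulVec_transpose, Matrix.mulVec_mulVec,
      dotProduct_comm]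
  have hUnorm : ∀ x : EuclideanSpace ℝ (Fin n), ‖U x‖ = ‖x‖ := by
    intro x
    rw [EuclideanSpace.norm_eq, EuclideanSpace.norm_eq]
    congr 1
    have h1 : ∀ i, (U x) i = (matOf U).mulVec (piE x) i := fun i => (matOf_mulVec U x i).symm
    calc ∑ i, ‖(U x) i‖^2 = (matOf U).mulVec (piE x) ⬝ᵥ (matOf U).mulVec (piE x) := by
          simp only [dotProduct, Real.norm_eq_abs, sq_abs, h1]
          exact Finset.sum_congr rfl fun i _ => sq (((matOf U).mulVec (piE x)) i) ▸ by ring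
      _ = piE x ⬝ᵥ (((matOf U)ᵀ * matOf U).mulVec (piE x)) := hdot x (matOf U)
      _ = ∑ i, ‖x i‖^2 := by
          rw [hQtQ, Matrix.one_mulVec]
          simp only [dotProduct, Real.norm_eq_abs, sq_abs]
          exact Finset.sum_congr rfl fun i _ => by rw [sq]; rfl
  have himg2 : U '' ball 0 1 = ball 0 1 := by
    ext y
    rw [LinearEquiv.image_eq_preimage_symm]
    simp only [Set.mem_preimage, mem_ball_zero_iff]
    have hy := hUnorm (U.symm y)
    rw [LinearEquiv.apply_symm_apply] at hy
    rw [hy]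
  calc A '' ball 0 1 = A' '' (U '' ball 0 1) := by
        rw [← Set.image_comp]
        congr 1
        ext x
        simp [hU]
    _ = A' '' ball 0 1 := by rw [himg2]

noncomputable def lf (c : Fin n → ℝ) : EuclideanSpace ℝ (Fin n) →ₗ[ℝ] ℝ :=
  ∑ i, c i • (PiLp.projₗ (𝕜 := ℝ) 2 (fun _ : Fin n => ℝ) i)

lemma lf_apply (c : Fin n → ℝ) (x : EuclideanSpace ℝ (Fin n)) : lf c x = ∑ i, c i * x i := by
  simp [lf, LinearMap.sum_apply, PiLp.projₗ]


/-- Let `Ω ⊆ ℝⁿ` be a bounded open convex set with center of mass the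
origin. Then there is a unique centered ellipsoid `ℰ` (the inertia ellipsoid of `Ω`) such
that `∫_Ω ψ(x)² dx = ∫_ℰ ψ(x)² dx` for every linear functional `ψ`. -/
theorem stmt_9 (n : ℕ) (hn : 1 ≤ n) (Ω : Set (EuclideanSpace ℝ (Fin n)))
    (hopen : IsOpen Ω) (hconv : Convex ℝ Ω) (hbdd : Bornology.IsBounded Ω)
    (hne : Ω.Nonempty) (hbary : ∫ x in Ω, x = 0) :
    ∃! ℰ : Set (EuclideanSpace ℝ (Fin n)),
      (∃ A : EuclideanSpace ℝ (Fin n) ≃ₗ[ℝ] EuclideanSpace ℝ (Fin n),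
        ℰ = A '' ball 0 1) ∧
      ∀ ψ : EuclideanSpace ℝ (Fin n) →ₗ[ℝ] ℝ,
        ∫ x in Ω, (ψ x) ^ 2 = ∫ x in ℰ, (ψ x) ^ 2 := by
  classical
  have hmeas : MeasurableSet Ω := hopen.measurableSet
  obtain ⟨κ, hκ, hQB⟩ := QF_ball (n := n) hn
  set M : Matrix (Fin n) (Fin n) ℝ := Matrix.of (fun i j => ∫ x in Ω, x i * x j) with hM
  have hMsymm : Mᵀ = M := by
    ext i j
    simp only [Matrix.transpose_apply, hM, Matrix.of_apply]
    exact integral_congr_ae (Filter.Eventually.of_forall fun x => mul_comm _ _)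
  have hQΩ : ∀ c : Fin n → ℝ, QF Ω c = c ⬝ᵥ M.mulVec c := by
    intro c
    rw [QF_eq hmeas hbdd, qf_expand]
    rfl
  have hMpd : M.PosDef := by
    refine Matrix.PosDef.of_dotProduct_mulVec_pos ?_ ?_
    · rw [Matrix.IsHermitian, Matrix.conjTranspose_eq_transpose_of_trivial, hMsymm]
    · intro c hc
      have h0 := QF_pos hopen hne hbdd (c := c) hc
      rw [hQΩ c] at h0
      simpa using h0
  obtain ⟨S, hSS, hSsymm⟩ : ∃ S : Matrix (Fin n) (Fin n) ℝ, S * S = M ∧ Sᵀ = S := by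
    open MatrixOrder in
    refine ⟨CFC.sqrt M, CFC.sqrt_mul_sqrt_self M hMpd.posSemidef.nonneg,
      by have h := (Matrix.nonneg_iff_posSemidef.mp (CFC.sqrt_nonneg M)).1
         rwa [Matrix.IsHermitian, Matrix.conjTranspose_eq_transpose_of_trivial] at h⟩
    all_goals rwa [Matrix.IsHermitian, Matrix.conjTranspose_eq_transpose_of_trivial] at h
  have hdetM : 0 < M.det := hMpd.det_pos
  have hdetS : S.det ≠ 0 := by
    intro h
    have h2 : M.det = S.det * S.det := by rw [← hSS, Matrix.det_mul]
    rw [h2, h, mul_zero] at hdetM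
    exact lt_irrefl _ hdetM
  set y := κ * |S.det| with hy
  have hy0 : 0 < y := mul_pos hκ (abs_pos.mpr hdetS)
  set t := y ^ (-(1 / ((n:ℝ) + 2))) with ht
  have ht0 : 0 < t := Real.rpow_pos_of_pos hy0 _
  have htpow : t ^ (n + 2) * y = 1 := by
    rw [ht, ← Real.rpow_natCast (y ^ (-(1 / ((n:ℝ) + 2)))) (n + 2), ← Real.rpow_mul hy0.le]
    have hne2 : ((n:ℝ) + 2) ≠ 0 := by positivity
    rw [show (-(1 / ((n:ℝ) + 2)) * ((n + 2 : ℕ) : ℝ)) = -1 by push_cast; field_simp]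
    rw [Real.rpow_neg_one]
    exact inv_mul_cancel₀ hy0.ne'
  set P := t • S with hPdef
  have hPdet : P.det = t ^ n * S.det := by rw [hPdef, Matrix.det_smul, Fintype.card_fin]
  have hPne : P.det ≠ 0 := by
    rw [hPdet]
    exact mul_ne_zero (pow_ne_zero _ ht0.ne') hdetS
  have hinv : Invertible P := P.invertibleOfIsUnitDet (isUnit_iff_ne_zero.mpr hPne)
  set A := matE P hinv with hA
  have hmatA : matOf A = P := matOf_matE P hinv
  have hQE : ∀ c : Fin n → ℝ, QF (A '' ball 0 1) c = c ⬝ᵥ M.mulVec c := by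
    intro c
    rw [QF_image A measurableSet_ball c, hmatA, hQB, sum_sq_eq]
    have hPPt : P * Pᵀ = (t^2) • M := by
      rw [hPdef, Matrix.transpose_smul, hSsymm, Matrix.smul_mul, Matrix.mul_smul, hSS,
        smul_smul, sq]
    rw [hPPt, Matrix.smul_mulVec, dotProduct_smul, smul_eq_mul]
    have habs : |P.det| = t^n * |S.det| := by
      rw [hPdet, abs_mul, abs_pow, abs_of_pos ht0]
    rw [habs]
    have hfin : t^n * |S.det| * (κ * (t^2 * (c ⬝ᵥ M.mulVec c)))
        = (t^(n+2) * y) * (c ⬝ᵥ M.mulVec c) := by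
      rw [hy]; ring
    rw [hfin, htpow, one_mul]
  refine ⟨A '' ball 0 1, ⟨⟨A, rfl⟩, ?_⟩, ?_⟩
  · intro ψ
    set c : Fin n → ℝ := fun i => ψ (EuclideanSpace.single i 1) with hc
    have h1 : ∫ x in Ω, (ψ x)^2 = QF Ω c :=
      integral_congr_ae (Filter.Eventually.of_forall fun x => by
        show ψ x ^ 2 = (∑ i, c i * x i) ^ 2
        rw [lin_repr ψ x])
    have h2 : ∫ x in A '' ball 0 1, (ψ x)^2 = QF (A '' ball 0 1) c :=
      integral_congr_ae (Filter.Eventually.of_forall fun x => by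
        show ψ x ^ 2 = (∑ i, c i * x i) ^ 2
        rw [lin_repr ψ x])
    rw [h1, h2, hQΩ, hQE]
  · rintro y' ⟨⟨A', rfl⟩, hy'⟩
    apply ellipsoid_eq hn A' A
    intro c
    have hψ : ∫ x in Ω, (lf c x)^2 = ∫ x in A' '' ball 0 1, (lf c x)^2 := hy' (lf c)
    have e1 : ∀ D : Set (EuclideanSpace ℝ (Fin n)), ∫ x in D, (lf c x)^2 = QF D c :=
      fun D => integral_congr_ae (Filter.Eventually.of_forall fun x => by
        show (lf c x) ^ 2 = (∑ i, c i * x i) ^ 2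
        rw [lf_apply])
    rw [e1, e1] at hψ
    rw [← hψ, hQΩ c, ← hQE c]
end
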